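/- For every p ∈ [0,1) and every ξ ∈ ℝ with 0 ≤ ξ and p·e^ξ < 1, one has Q̃₂(ξ,p) > 0 if and only if ξ < ξ₂(p). -/

import Mathlib

open Finset

/-- `Q̃₂(ξ,p) = 1 − e^ξ + (1−p)·e^ξ·∑_{j=0}^b q(j)·p^j·e^{jξ}`, the numerator of the
critical-exponent equation for the algorithm class `𝒜₂`. -/
noncomputable def Qt2 (b : ℕ) (q : ℕ → ℝ) (ξ p : ℝ) : ℝ :=
  1 - Real.exp ξ + (1 - p) * Real.exp ξ *
    ∑ j ∈ Finset.range (b + 1), q j * p ^ j * Real.exp (j * ξ)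

lemma qt2_continuous (b : ℕ) (q : ℕ → ℝ) (p : ℝ) :
    Continuous (fun ξ => Qt2 b q ξ p) := by
  unfold Qt2
  continuity

lemma qt2_zero_pos (b : ℕ) (q : ℕ → ℝ) (hq : ∀ j, 0 ≤ q j) (hq0 : 0 < q 0)
    {p : ℝ} (hp0 : 0 ≤ p) (hp1 : p < 1) : 0 < Qt2 b q 0 p := by
  have hsum : q 0 ≤ ∑ j ∈ Finset.range (b + 1), q j * p ^ j := by
    have := Finset.single_le_sum (f := fun j => q j * p ^ j)
      (fun j _ => mul_nonneg (hq j) (pow_nonneg hp0 j))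
      (Finset.mem_range.mpr (Nat.succ_pos b))
    simpa using this
  have : 0 < ∑ j ∈ Finset.range (b + 1), q j * p ^ j := lt_of_lt_of_le hq0 hsum
  have h := mul_pos (sub_pos.mpr hp1) this
  simp only [Qt2, Real.exp_zero]
  have : (∑ j ∈ Finset.range (b + 1), q j * p ^ j * Real.exp ((j : ℝ) * 0))
      = ∑ j ∈ Finset.range (b + 1), q j * p ^ j := by
    apply Finset.sum_congr rfl
    intro j _
    simp
  rw [this]
  linarith

/-- There is a point strictly beyond `ξ`, still in the domain, where `Qt2` is negative. -/
lemma qt2_neg_exists (b : ℕ) (q : ℕ → ℝ) (hq : ∀ j, 0 ≤ q j)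
    (hqsum : ∑ j ∈ Finset.range (b + 1), q j < 1)
    {p : ℝ} (hp0 : 0 ≤ p) (hp1 : p < 1) (ξ : ℝ) (hpe : p * Real.exp ξ < 1) :
    ∃ ξ' : ℝ, ξ < ξ' ∧ p * Real.exp ξ' < 1 ∧ Qt2 b q ξ' p < 0 := by
  rcases eq_or_lt_of_le hp0 with hp | hp
  · -- p = 0
    subst hp
    have hq0le : q 0 ≤ ∑ j ∈ Finset.range (b + 1), q j := by
      apply Finset.single_le_sum (f := fun j => q j) (fun j _ => hq j)
      exact Finset.mem_range.mpr (Nat.succ_pos b)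
    have hq01 : q 0 < 1 := lt_of_le_of_lt hq0le hqsum
    have h1q : (0:ℝ) < 1 - q 0 := by linarith
    set ξ' := max (ξ + 1) (Real.log (2 / (1 - q 0))) with hξ'
    refine ⟨ξ', lt_of_lt_of_le (by linarith) (le_max_left _ _), ?_, ?_⟩
    · simpa using Real.exp_pos ξ'
    · have hexp : 2 / (1 - q 0) ≤ Real.exp ξ' := by
        calc 2 / (1 - q 0) = Real.exp (Real.log (2 / (1 - q 0))) := by
              rw [Real.exp_log (by positivity)]
          _ ≤ Real.exp ξ' := Real.exp_le_exp.mpr (le_max_right _ _)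
      have hsum0 : (∑ j ∈ Finset.range (b + 1), q j * (0:ℝ) ^ j * Real.exp ((j:ℝ) * ξ'))
          = q 0 := by
        rw [Finset.sum_eq_single_of_mem 0 (Finset.mem_range.mpr (Nat.succ_pos b))]
        · simp
        · intro j _ hj
          simp [zero_pow hj]
      have h2 : 2 ≤ (1 - q 0) * Real.exp ξ' := by
        rw [div_le_iff₀ h1q] at hexp
        linarith [hexp]
      simp only [Qt2, hsum0]
      nlinarith [Real.exp_pos ξ']
  · -- p > 0
    set ξ₀ := -Real.log p with hξ₀
    have hexpξ₀ : Real.exp ξ₀ = p⁻¹ := by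
      rw [hξ₀, Real.exp_neg, Real.exp_log hp]
    have hQξ₀ : Qt2 b q ξ₀ p < 0 := by
      have hsum : (∑ j ∈ Finset.range (b + 1), q j * p ^ j * Real.exp ((j:ℝ) * ξ₀))
          = ∑ j ∈ Finset.range (b + 1), q j := by
        apply Finset.sum_congr rfl
        intro j _
        rw [mul_comm (j:ℝ) ξ₀, Real.exp_mul, hexpξ₀, Real.rpow_natCast]
        field_simp
        rw [mul_assoc, ← mul_pow, mul_one_div_cancel hp.ne', one_pow, mul_one]
      have key : p * Qt2 b q ξ₀ p
          = (1 - p) * ((∑ j ∈ Finset.range (b + 1), q j) - 1) := by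
        simp only [Qt2, hsum, hexpξ₀]
        field_simp
        ring
      have hneg : p * Qt2 b q ξ₀ p < 0 := by
        rw [key]
        apply mul_neg_of_pos_of_neg (by linarith)
        linarith
      by_contra h
      push_neg at h
      nlinarith
    have hξlt : ξ < ξ₀ := by
      have h1 : p * Real.exp ξ < p * Real.exp ξ₀ := by
        rw [hexpξ₀, mul_inv_cancel₀ (ne_of_gt hp)]; exact hpe
      exact Real.exp_lt_exp.mp (lt_of_mul_lt_mul_left h1 hp0)
    -- openness: find δ-ball around ξ₀ where Qt2 < 0
    have hopen : IsOpen {x : ℝ | Qt2 b q x p < 0} := by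
      have := (qt2_continuous b q p)
      exact isOpen_lt this continuous_const
    obtain ⟨δ, hδpos, hball⟩ := Metric.isOpen_iff.mp hopen ξ₀ hQξ₀
    set ξ' := (max ξ (ξ₀ - δ) + ξ₀) / 2 with hξ'
    have h1 : max ξ (ξ₀ - δ) < ξ₀ := max_lt hξlt (by linarith)
    have hξ'lt : ξ' < ξ₀ := by rw [hξ']; linarith
    have hξ'gt : ξ < ξ' := by
      have := le_max_left ξ (ξ₀ - δ)
      rw [hξ']; linarith
    have hξ'gt2 : ξ₀ - δ < ξ' := by
      have := le_max_right ξ (ξ₀ - δ)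
      rw [hξ']; linarith
    have hmem : ξ' ∈ Metric.ball ξ₀ δ := by
      rw [Metric.mem_ball, Real.dist_eq, abs_lt]
      constructor <;> linarith
    refine ⟨ξ', hξ'gt, ?_, hball hmem⟩
    have : Real.exp ξ' < p⁻¹ := by
      rw [← hexpξ₀]; exact Real.exp_lt_exp.mpr hξ'lt
    calc p * Real.exp ξ' < p * p⁻¹ := by
          exact mul_lt_mul_of_pos_left this hp
      _ = 1 := mul_inv_cancel₀ (ne_of_gt hp)

/-- For `p ∈ [0,1)` and `ξ` with `0 ≤ ξ` and `p·e^ξ < 1`: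
`Q̃₂(ξ,p) > 0` iff `ξ < ξ₂(p)`. -/
theorem stmt_7 (b : ℕ) (q : ℕ → ℝ)
    (hq : ∀ j, 0 ≤ q j) (hqb : ∀ j, b < j → q j = 0) (hq0 : 0 < q 0)
    (hqsum : ∑ j ∈ Finset.range (b + 1), q j < 1)
    (ξ₂ : ℝ → ℝ)
    (hξ₂ : ∀ p ∈ Set.Ico (0 : ℝ) 1,
      (0 < ξ₂ p ∧ p * Real.exp (ξ₂ p) < 1 ∧ Qt2 b q (ξ₂ p) p = 0) ∧
      ∀ ξ : ℝ, 0 < ξ → p * Real.exp ξ < 1 → Qt2 b q ξ p = 0 → ξ = ξ₂ p) :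
    ∀ p ∈ Set.Ico (0 : ℝ) 1, ∀ ξ : ℝ, 0 ≤ ξ → p * Real.exp ξ < 1 →
      (0 < Qt2 b q ξ p ↔ ξ < ξ₂ p) := by
  intro p hp ξ hξ0 hpe
  obtain ⟨hp0, hp1⟩ := hp
  obtain ⟨⟨hx2pos, hx2dom, hx2zero⟩, huniq⟩ := hξ₂ p ⟨hp0, hp1⟩
  have hcont := qt2_continuous b q p
  constructor
  · intro hQ
    by_contra hle
    push_neg at hle
    rcases eq_or_lt_of_le hle with heq | hlt
    · rw [heq] at hx2zero; linarith
    · -- ξ₂ p < ξ, Qt2 ξ > 0, find negative point beyond and a second zero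
      obtain ⟨ξ', hξ'gt, hξ'dom, hξ'neg⟩ :=
        qt2_neg_exists b q hq hqsum hp0 hp1 ξ hpe
      have hab : ξ ≤ ξ' := hξ'gt.le
      have := intermediate_value_Ioo' hab (hcont.continuousOn
        (s := Set.Icc ξ ξ'))
      have hmem : (0:ℝ) ∈ Set.Ioo (Qt2 b q ξ' p) (Qt2 b q ξ p) := ⟨hξ'neg, hQ⟩
      obtain ⟨x, hx, hxz⟩ := this hmem
      have hxpos : 0 < x := lt_of_le_of_lt hξ0 hx.1
      have hxdom : p * Real.exp x < 1 := by
        have : Real.exp x ≤ Real.exp ξ' := Real.exp_le_exp.mpr hx.2.le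
        nlinarith [Real.exp_pos x]
      have := huniq x hxpos hxdom hxz
      rw [this] at hx
      linarith [hx.1]
  · intro hlt
    by_contra hQle
    push_neg at hQle
    rcases eq_or_lt_of_le hξ0 with heq | hξpos
    · rw [← heq] at hQle
      linarith [qt2_zero_pos b q hq hq0 hp0 hp1]
    rcases eq_or_lt_of_le hQle with heq | hneg
    · have := huniq ξ hξpos hpe heq
      linarith
    · -- Qt2 ξ < 0, Qt2 0 > 0, zero in (0, ξ)
      have h0pos := qt2_zero_pos b q hq hq0 hp0 hp1
      have := intermediate_value_Ioo' hξ0 (hcont.continuousOn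
        (s := Set.Icc 0 ξ))
      have hmem : (0:ℝ) ∈ Set.Ioo (Qt2 b q ξ p) (Qt2 b q 0 p) := ⟨hneg, h0pos⟩
      obtain ⟨x, hx, hxz⟩ := this hmem
      have hxdom : p * Real.exp x < 1 := by
        have : Real.exp x ≤ Real.exp ξ := Real.exp_le_exp.mpr hx.2.le
        nlinarith [Real.exp_pos x]
      have := huniq x hx.1 hxdom hxz
      rw [this] at hx
      linarith [hx.2]
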